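/- Let f, g : [−1, 1] → ℝ be continuous, strictly increasing functions such that 0 is the unique fixed point of each (for x ∈ [−1, 1], f(x) = x if and only if x = 0, and similarly for g). Let h : ℝ² → ℝ² be a homeomorphism such that h(x, 0) = (x, 0) for all x ∈ [−1, 1] and h(0, y) = (0, y) for all y ∈ [−1, 1], and define r on h([−1, 1]²) by r(h(x, y)) = h(f(x), g(y)). Then for every integer n ≥ 1 and every point p ∈ h([−1, 1]²) for which the iterates r(p), r²(p), …, r^{n−1}(p) remain in h([−1, 1]²): if rⁿ(p) = p, then p = (0, 0). Equivalently, the displacement vector field X(p) = rⁿ(p) − p is nonzero everywhere except at the origin. (This is item (1) of the paper's proposition on product maps; it holds because r is topologically conjugate to f × g, which has no periodic points other than the origin.) -/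

import Mathlib

open Set

/-- Auxiliary: if `a 0 < f (a 0)` and `a (k+1) = f (a k)` with all terms in the
interval, then the chain is strictly increasing, contradicting `a n = a 0`. -/
lemma chain_increasing_false (f : ℝ → ℝ) (hfm : StrictMonoOn f (Icc (-1:ℝ) 1))
    (n : ℕ) (hn : 1 ≤ n) (a : ℕ → ℝ)
    (ha : ∀ k < n, a k ∈ Icc (-1:ℝ) 1)
    (hstep : ∀ k < n, a (k + 1) = f (a k))
    (hper : a n = a 0)
    (hgt : a 0 < f (a 0)) : False := by
  have step : ∀ k, k < n → a k < a (k + 1) := by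
    intro k
    induction k with
    | zero => intro _; rw [hstep 0 hn]; exact hgt
    | succ k ih =>
      intro hk
      have hk' : k < n := Nat.lt_of_succ_lt hk
      have h1 : a k < a (k + 1) := ih hk'
      have : f (a k) < f (a (k + 1)) := hfm (ha k hk') (ha (k + 1) hk) h1
      calc a (k + 1) = f (a k) := hstep k hk'
        _ < f (a (k + 1)) := this
        _ = a (k + 2) := (hstep (k + 1) hk).symm
  have chain : ∀ k, k ≤ n → a 0 ≤ a k := by
    intro k
    induction k with
    | zero => intro _; exact le_refl _
    | succ k ih =>
      intro hk
      have hk' : k < n := Nat.lt_of_succ_le hk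
      exact le_trans (ih (le_of_lt hk')) (le_of_lt (step k hk'))
  have h1 : a (n - 1) < a n := by
    have := step (n - 1) (by omega)
    rwa [Nat.sub_add_cancel hn] at this
  have h2 : a 0 ≤ a (n - 1) := chain (n - 1) (by omega)
  rw [hper] at h1
  linarith

lemma chain_fixed (f : ℝ → ℝ) (hfm : StrictMonoOn f (Icc (-1:ℝ) 1))
    (hffix : ∀ x ∈ Icc (-1:ℝ) 1, f x = x ↔ x = 0)
    (n : ℕ) (hn : 1 ≤ n) (a : ℕ → ℝ)
    (ha : ∀ k < n, a k ∈ Icc (-1:ℝ) 1)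
    (hstep : ∀ k < n, a (k + 1) = f (a k))
    (hper : a n = a 0) : a 0 = 0 := by
  by_contra h0
  have ha0 := ha 0 hn
  have hne : f (a 0) ≠ a 0 := fun hh => h0 ((hffix _ ha0).mp hh)
  rcases lt_or_gt_of_ne hne with hlt | hgt
  · -- decreasing case: negate everything
    have hmem : ∀ x ∈ Icc (-1:ℝ) 1, -x ∈ Icc (-1:ℝ) 1 := by
      intro x hx
      constructor <;> [linarith [hx.2]; linarith [hx.1]]
    refine chain_increasing_false (fun x => -f (-x)) ?_ n hn (fun k => -a k)
      (fun k hk => hmem _ (ha k hk)) ?_ (by show -a n = -a 0; rw [hper]) ?_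
    · intro x hx y hy hxy
      have := hfm (hmem y hy) (hmem x hx) (by linarith)
      simpa using this
    · intro k hk
      simp [hstep k hk]
    · simpa using hlt
  · exact chain_increasing_false f hfm n hn a ha hstep hper hgt

/-- item (1) of the proposition on product maps.
If `f, g : [−1,1] → ℝ` are continuous strictly-increasing maps whose unique fixed
point is `0`, `h` is a homeomorphism of `ℝ²` fixing the two coordinate segments
pointwise, and `r` is the conjugate of `f × g` by `h` on `h([−1,1]²)`, then the only
point of `h([−1,1]²)` whose first `n − 1` iterates stay in `h([−1,1]²)` and which is
fixed by `rⁿ` is the origin; i.e. the displacement vector field `X(p) = rⁿ(p) − p`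
vanishes only at the origin. -/
theorem product_map_unique_periodic_point
    (f g : ℝ → ℝ)
    (hfc : ContinuousOn f (Icc (-1:ℝ) 1)) (hgc : ContinuousOn g (Icc (-1:ℝ) 1))
    (hfm : StrictMonoOn f (Icc (-1:ℝ) 1)) (hgm : StrictMonoOn g (Icc (-1:ℝ) 1))
    (hffix : ∀ x ∈ Icc (-1:ℝ) 1, f x = x ↔ x = 0)
    (hgfix : ∀ y ∈ Icc (-1:ℝ) 1, g y = y ↔ y = 0)
    (h : (ℝ × ℝ) ≃ₜ (ℝ × ℝ))
    (hhx : ∀ x ∈ Icc (-1:ℝ) 1, h (x, 0) = (x, 0))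
    (hhy : ∀ y ∈ Icc (-1:ℝ) 1, h (0, y) = (0, y))
    (r : ℝ × ℝ → ℝ × ℝ)
    (hr : ∀ x ∈ Icc (-1:ℝ) 1, ∀ y ∈ Icc (-1:ℝ) 1, r (h (x, y)) = h (f x, g y))
    (n : ℕ) (hn : 1 ≤ n) (p : ℝ × ℝ)
    (hp : ∀ k < n, r^[k] p ∈ h '' (Icc (-1:ℝ) 1 ×ˢ Icc (-1:ℝ) 1))
    (hfix : r^[n] p = p) :
    p = (0, 0) := by
  set q : ℕ → ℝ × ℝ := fun k => h.symm (r^[k] p) with hq_def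
  have hhq : ∀ k, h (q k) = r^[k] p := fun k => h.apply_symm_apply _
  have hq : ∀ k < n, q k ∈ Icc (-1:ℝ) 1 ×ˢ Icc (-1:ℝ) 1 := by
    intro k hk
    obtain ⟨a, haS, hae⟩ := hp k hk
    have : q k = a := by rw [hq_def]; simp [← hae]
    rwa [this]
  have hstep : ∀ k < n, q (k + 1) = (f (q k).1, g (q k).2) := by
    intro k hk
    have hmem := hq k hk
    have h1 : r^[k + 1] p = h (f (q k).1, g (q k).2) := by
      rw [Function.iterate_succ_apply', ← hhq k]
      have := hr (q k).1 hmem.1 (q k).2 hmem.2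
      simpa using this
    rw [hq_def]
    simp [h1]; exact ⟨rfl, rfl⟩
  have hper : q n = q 0 := by rw [hq_def]; simp [hfix]
  have hx0 : (q 0).1 = 0 := by
    refine chain_fixed f hfm hffix n hn (fun k => (q k).1)
      (fun k hk => (hq k hk).1)
      (fun k hk => by simpa using congrArg Prod.fst (hstep k hk))
      (by simpa using congrArg Prod.fst hper)
  have hy0 : (q 0).2 = 0 := by
    refine chain_fixed g hgm hgfix n hn (fun k => (q k).2)
      (fun k hk => (hq k hk).2)
      (fun k hk => by simpa using congrArg Prod.snd (hstep k hk))
      (by simpa using congrArg Prod.snd hper)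
  have hq0 : q 0 = (0, 0) := Prod.ext hx0 hy0
  have : p = h (q 0) := by rw [hhq 0]; simp
  rw [this, hq0]
  exact hhx 0 (by norm_num)
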